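/- Let S = (A,B) be an interval sequence, let C and D be levelled sequences lying in S, with D graphic. If vol(D,S) ≤ vol(C,S), then the interval sequence (A,C) is realizable; if vol(D,S) ≥ vol(C,S), then the interval sequence (C,B) is realizable. -/

import Mathlib

open Finset

/-- A sequence is graphic if it is the degree sequence of a simple graph. -/
def IsGraphic {n : ℕ} (D : Fin n → ℕ) : Prop :=
  ∃ (G : SimpleGraph (Fin n)) (_ : DecidableRel G.Adj), ∀ i, G.degree i = D i

/-- The levelling operation: decrement entry `α` by 1, increment entry `β` by 1. -/
def lvl {n : ℕ} (D : Fin n → ℕ) (α β : Fin n) : Fin n → ℕ :=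
  fun i => if i = α then D α - 1 else if i = β then D β + 1 else D i

/-- The spread `φ(D) = ∑_{r<s} |d_r - d_s|`. -/
def spread {n : ℕ} (D : Fin n → ℕ) : ℤ :=
  ∑ r : Fin n, ∑ s : Fin n, if r < s then |(D r : ℤ) - (D s : ℤ)| else 0

/-- `A ≤ D ≤ B` coordinatewise. -/
def Between {n : ℕ} (A D B : Fin n → ℕ) : Prop := ∀ i, A i ≤ D i ∧ D i ≤ B i

/-- Volume of `D` w.r.t. lower boundary `A`. -/
def vol {n : ℕ} (A D : Fin n → ℕ) : ℕ := ∑ i, (D i - A i)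

/-- An interval sequence `(A,B)` is realizable if it contains a graphic sequence. -/
def Realizable {n : ℕ} (A B : Fin n → ℕ) : Prop := ∃ D, IsGraphic D ∧ Between A D B

/-- Two sequences are similar if one is a permutation of the other. -/
def SimilarSeq {n : ℕ} (D D' : Fin n → ℕ) : Prop :=
  ∃ σ : Equiv.Perm (Fin n), ∀ i, D' i = D (σ i)

/-- `D` is levelled w.r.t. `(A,B)`: it lies in `[A,B]` and no levelling operation staying
within `[A,B]` strictly decreases its spread. -/
def IsLevelled {n : ℕ} (A B D : Fin n → ℕ) : Prop :=
  Between A D B ∧ ∀ α β : Fin n, α ≠ β → D β < D α → Between A (lvl D α β) B →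
    spread D ≤ spread (lvl D α β)

/-- One levelling step from `D` to `D'` staying within `[A,B]`. -/
def LvlStep {n : ℕ} (A B D D' : Fin n → ℕ) : Prop :=
  ∃ α β : Fin n, α ≠ β ∧ D β < D α ∧ D' = lvl D α β ∧ Between A D' B

/-- `F(ℓ,S) = ∑_i (min(ℓ,b_i) - min(ℓ,a_i))`. -/
noncomputable def Fvol {n : ℕ} (A B : Fin n → ℕ) (ℓ : ℝ) : ℝ :=
  ∑ i, (min ℓ (B i : ℝ) - min ℓ (A i : ℝ))

/-- Upper deviation `δ_U(D,S) = ∑_i max(0, d_i - b_i)` (truncated subtraction). -/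
def devU {n : ℕ} (D B : Fin n → ℕ) : ℕ := ∑ i, (D i - B i)

/-- Lower deviation `δ_L(D,S) = ∑_i max(0, a_i - d_i)` (truncated subtraction). -/
def devL {n : ℕ} (D A : Fin n → ℕ) : ℕ := ∑ i, (A i - D i)

/-- `R` lies in `[B,⊤]`, `(A,R)` is realizable, and `∑ (r_i - b_i)` is minimum. -/
def MinUpper {n : ℕ} (A B R : Fin n → ℕ) : Prop :=
  (∀ i, B i ≤ R i ∧ R i ≤ n - 1) ∧ Realizable A R ∧
  ∀ R' : Fin n → ℕ, (∀ i, B i ≤ R' i ∧ R' i ≤ n - 1) → Realizable A R' →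
    ∑ i, (R i - B i) ≤ ∑ i, (R' i - B i)

lemma sum_split {n : ℕ} {M : Type*} [AddCommMonoid M] (α β : Fin n) (hab : α ≠ β)
    (f : Fin n → M) :
    ∑ r, f r = f α + f β + ∑ r ∈ (univ.erase α).erase β, f r := by
  have h1 : f α + ∑ x ∈ univ.erase α, f x = ∑ x, f x :=
    Finset.add_sum_erase _ f (mem_univ α)
  have h2 : f β + ∑ x ∈ (univ.erase α).erase β, f x = ∑ x ∈ univ.erase α, f x :=
    Finset.add_sum_erase _ f (by simp [hab.symm])
  rw [← h1, ← h2, ← add_assoc]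

lemma two_spread {n : ℕ} (x : Fin n → ℕ) :
    2 * spread x = ∑ r : Fin n, ∑ s : Fin n, |(x r : ℤ) - (x s : ℤ)| := by
  have hsymm : spread x = ∑ r : Fin n, ∑ s : Fin n,
      if s < r then |(x r : ℤ) - (x s : ℤ)| else 0 := by
    rw [spread, Finset.sum_comm]
    refine Finset.sum_congr rfl fun a _ => Finset.sum_congr rfl fun b _ => ?_
    by_cases h : b < a <;> simp [h, abs_sub_comm]
  rw [two_mul]
  nth_rewrite 2 [hsymm]
  rw [spread, ← Finset.sum_add_distrib]
  refine Finset.sum_congr rfl fun a _ => ?_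
  rw [← Finset.sum_add_distrib]
  refine Finset.sum_congr rfl fun b _ => ?_
  rcases lt_trichotomy a b with h|h|h
  · simp [h, asymm h]
  · subst h; simp
  · simp [h, asymm h]

lemma spread_lvl_lt {n : ℕ} (x : Fin n → ℕ) (α β : Fin n) (h : x β + 2 ≤ x α) :
    spread (lvl x α β) < spread x := by
  have hab : α ≠ β := by rintro rfl; omega
  have h2 : 2 * spread (lvl x α β) < 2 * spread x := by
    rw [two_spread, two_spread]
    set y : Fin n → ℤ := fun i => (x i : ℤ) with hy
    set y' : Fin n → ℤ := fun i => (lvl x α β i : ℤ) with hy'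
    have hyα : y' α = y α - 1 := by
      have e : lvl x α β α = x α - 1 := by simp [lvl]
      simp only [hy', hy, e]; omega
    have hyβ : y' β = y β + 1 := by
      have e : lvl x α β β = x β + 1 := by simp [lvl, hab.symm]
      simp only [hy', hy, e]; push_cast; ring
    have hyo : ∀ i, i ≠ α → i ≠ β → y' i = y i := by
      intro i h1 h2; simp only [hy', hy, lvl, if_neg h1, if_neg h2]
    have hzab : y β + 2 ≤ y α := by simp only [hy]; exact_mod_cast h
    set u : Finset (Fin n) := (univ.erase α).erase β with hu
    have expand : ∀ z : Fin n → ℤ, (∑ r : Fin n, ∑ s : Fin n, |z r - z s|) =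
        ((|z α - z β| + |z β - z α|)
          + ∑ s ∈ u, ((|z α - z s| + |z β - z s|) + (|z s - z α| + |z s - z β|)))
          + ∑ r ∈ u, ∑ s ∈ u, |z r - z s| := by
      intro z
      have hrow : ∀ r ∈ u, (∑ s : Fin n, |z r - z s|) =
          (|z r - z α| + |z r - z β|) + ∑ s ∈ u, |z r - z s| := by
        intro r _
        rw [sum_split α β hab (fun s => |z r - z s|)]
      rw [sum_split α β hab (fun r => ∑ s : Fin n, |z r - z s|),
        sum_split α β hab (fun s => |z α - z s|),
        sum_split α β hab (fun s => |z β - z s|),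
        Finset.sum_congr rfl hrow]
      simp only [Finset.sum_add_distrib, sub_self, abs_zero]
      abel
    rw [expand y', expand y]
    have hcore : (∑ r ∈ u, ∑ s ∈ u, |y' r - y' s|) = ∑ r ∈ u, ∑ s ∈ u, |y r - y s| := by
      refine Finset.sum_congr rfl fun r hr => Finset.sum_congr rfl fun s hs => ?_
      simp only [hu, Finset.mem_erase] at hr hs
      rw [hyo r hr.2.1 hr.1, hyo s hs.2.1 hs.1]
    have hpair : |y' α - y' β| + 2 ≤ |y α - y β| ∧ |y' β - y' α| + 2 ≤ |y β - y α| := by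
      rw [hyα, hyβ]
      constructor
      · rcases abs_cases (y α - 1 - (y β + 1)) with ⟨e1, _⟩|⟨e1, _⟩ <;>
          rcases abs_cases (y α - y β) with ⟨e2, _⟩|⟨e2, _⟩ <;> rw [e1, e2] <;> omega
      · rcases abs_cases (y β + 1 - (y α - 1)) with ⟨e1, _⟩|⟨e1, _⟩ <;>
          rcases abs_cases (y β - y α) with ⟨e2, _⟩|⟨e2, _⟩ <;> rw [e1, e2] <;> omega
    have hmid : ∀ s ∈ u, (|y' α - y' s| + |y' β - y' s|) + (|y' s - y' α| + |y' s - y' β|)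
        ≤ (|y α - y s| + |y β - y s|) + (|y s - y α| + |y s - y β|) := by
      intro s hs
      simp only [hu, Finset.mem_erase] at hs
      rw [hyα, hyβ, hyo s hs.2.1 hs.1]
      rw [abs_sub_comm (y s) (y α - 1), abs_sub_comm (y s) (y β + 1),
        abs_sub_comm (y s) (y α), abs_sub_comm (y s) (y β)]
      rcases abs_cases (y α - 1 - y s) with ⟨e1, _⟩|⟨e1, _⟩ <;>
        rcases abs_cases (y β + 1 - y s) with ⟨e2, _⟩|⟨e2, _⟩ <;>
        rcases abs_cases (y α - y s) with ⟨e3, _⟩|⟨e3, _⟩ <;>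
        rcases abs_cases (y β - y s) with ⟨e4, _⟩|⟨e4, _⟩ <;>
        rw [e1, e2, e3, e4] <;> omega
    have := Finset.sum_le_sum hmid
    linarith [hpair.1, hpair.2, hcore.le, hcore.ge]
  omega

lemma graphic_lvl {n : ℕ} {D : Fin n → ℕ} {α β : Fin n} (hab : α ≠ β)
    (hlt : D β < D α) (hg : IsGraphic D) : IsGraphic (lvl D α β) := by
  classical
  obtain ⟨G, inst, hdeg⟩ := hg
  have hv : ∃ v, G.Adj α v ∧ ¬ G.Adj β v ∧ v ≠ β := by
    by_contra hcon
    push_neg at hcon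
    have hsub : (G.neighborFinset α).erase β ⊆ (G.neighborFinset β).erase α := by
      intro y hy
      rw [Finset.mem_erase, SimpleGraph.mem_neighborFinset] at hy
      obtain ⟨hyβ, hyadj⟩ := hy
      have hβy : G.Adj β y := by
        by_contra hna; exact hyβ (hcon y hyadj hna)
      rw [Finset.mem_erase, SimpleGraph.mem_neighborFinset]
      exact ⟨(G.ne_of_adj hyadj).symm, hβy⟩
    have hcard := Finset.card_le_card hsub
    have hc1 : G.degree α - 1 ≤ ((G.neighborFinset α).erase β).card :=
      Finset.pred_card_le_card_erase
    have hc2 : ((G.neighborFinset β).erase α).card ≤ G.degree β :=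
      le_trans (Finset.card_erase_le) le_rfl
    rw [hdeg α] at hc1; rw [hdeg β] at hc2
    by_cases hβα : G.Adj α β
    · have hm1 : β ∈ G.neighborFinset α := by rwa [SimpleGraph.mem_neighborFinset]
      have hm2 : α ∈ G.neighborFinset β := by
        rw [SimpleGraph.mem_neighborFinset]; exact hβα.symm
      have e1 : ((G.neighborFinset α).erase β).card = D α - 1 := by
        rw [Finset.card_erase_of_mem hm1]; rw [← hdeg α]; rfl
      have e2 : ((G.neighborFinset β).erase α).card = D β - 1 := by
        rw [Finset.card_erase_of_mem hm2]; rw [← hdeg β]; rfl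
      have hpos : 1 ≤ D β := by
        rw [← hdeg β]
        exact Finset.card_pos.mpr ⟨α, hm2⟩
      omega
    · have e1 : (G.neighborFinset α).erase β = G.neighborFinset α := by
        apply Finset.erase_eq_of_notMem
        rw [SimpleGraph.mem_neighborFinset]; exact hβα
      rw [e1] at hcard
      have : (G.neighborFinset α).card = D α := by rw [← hdeg α]; rfl
      omega
  obtain ⟨v, hαv, hβv, hvβ⟩ := hv
  have hvα : v ≠ α := (G.ne_of_adj hαv).symm
  have hsymm : Symmetric (fun x y => x ≠ y ∧ ((G.Adj x y ∧ ¬((x = α ∧ y = v) ∨ (x = v ∧ y = α)))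
      ∨ ((x = β ∧ y = v) ∨ (x = v ∧ y = β)))) := by
    intro x y h
    obtain ⟨hxy, h⟩ := h
    refine ⟨hxy.symm, ?_⟩
    rcases h with ⟨ha, hexc⟩ | h
    · exact Or.inl ⟨ha.symm, by tauto⟩
    · exact Or.inr (by tauto)
  set G' : SimpleGraph (Fin n) :=
    { Adj := fun x y => x ≠ y ∧ ((G.Adj x y ∧ ¬((x = α ∧ y = v) ∨ (x = v ∧ y = α)))
        ∨ ((x = β ∧ y = v) ∨ (x = v ∧ y = β)))
      symm := ⟨fun x y h => hsymm h⟩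
      loopless := ⟨fun x h => h.1 rfl⟩ } with hG'
  haveI instG' : DecidableRel G'.Adj := fun x y => Classical.dec _
  refine ⟨G', instG', ?_⟩
  intro i
  show (G'.neighborFinset i).card = _
  have hadj : ∀ x y, G'.Adj x y ↔ x ≠ y ∧ ((G.Adj x y ∧ ¬((x = α ∧ y = v) ∨ (x = v ∧ y = α)))
      ∨ ((x = β ∧ y = v) ∨ (x = v ∧ y = β))) := fun x y => Iff.rfl
  by_cases hiα : i = α
  · subst hiα
    have hset : G'.neighborFinset i = (G.neighborFinset i).erase v := by
      ext y
      simp only [SimpleGraph.mem_neighborFinset, Finset.mem_erase, hadj]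
      have f1 : ¬ (i = v) := fun h => hvα h.symm
      have f2 : ¬ (i = β) := hab
      have f3 : (i = i) := rfl
      have f4 : G.Adj i y → ¬ (i = y) := fun h e => (G.ne_of_adj h) e
      tauto
    rw [hset, Finset.card_erase_of_mem (by rwa [SimpleGraph.mem_neighborFinset])]
    have : (G.neighborFinset i).card = D i := by rw [← hdeg i]; rfl
    rw [this]
    simp [lvl]
  · by_cases hiβ : i = β
    · subst hiβ
      have hset : G'.neighborFinset i = insert v (G.neighborFinset i) := by
        ext y
        simp only [SimpleGraph.mem_neighborFinset, Finset.mem_insert, hadj]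
        have f1 : ¬ (i = v) := fun h => hvβ h.symm
        have f2 : ¬ (i = α) := fun h => hiα h
        have f3 : (i = i) := rfl
        have f4 : G.Adj i y → ¬ (i = y) := fun h e => (G.ne_of_adj h) e
        have f5 : y = v → ¬ (i = y) := fun h e => hvβ (h ▸ e.symm)
        tauto
      rw [hset, Finset.card_insert_of_notMem (by rwa [SimpleGraph.mem_neighborFinset])]
      have : (G.neighborFinset i).card = D i := by rw [← hdeg i]; rfl
      rw [this]
      simp [lvl, hab.symm]
    · by_cases hiv : i = v
      · subst hiv
        have hvadjα : G.Adj i α := hαv.symm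
        have hnadjβ : ¬ G.Adj i β := fun h => hβv h.symm
        have hset : G'.neighborFinset i = insert β ((G.neighborFinset i).erase α) := by
          ext y
          simp only [SimpleGraph.mem_neighborFinset, Finset.mem_insert, Finset.mem_erase, hadj]
          have f1 : ¬ (i = α) := hvα
          have f2 : ¬ (i = β) := hvβ
          have f3 : (i = i) := rfl
          have f4 : G.Adj i y → ¬ (i = y) := fun h e => (G.ne_of_adj h) e
          have f5 : y = β → ¬ (i = y) := fun h e => hvβ (e.trans h)
          tauto
        rw [hset, Finset.card_insert_of_notMem (by
          simp only [Finset.mem_erase, SimpleGraph.mem_neighborFinset]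
          tauto)]
        rw [Finset.card_erase_of_mem (by rwa [SimpleGraph.mem_neighborFinset])]
        have h0 : (G.neighborFinset i).card = D i := by rw [← hdeg i]; rfl
        have hpos : 1 ≤ (G.neighborFinset i).card :=
          Finset.card_pos.mpr ⟨α, by rwa [SimpleGraph.mem_neighborFinset]⟩
        rw [show ((G.neighborFinset i).card - 1) + 1 = (G.neighborFinset i).card by omega,
          h0]
        simp [lvl, hvα, hvβ]
      · have hset : G'.neighborFinset i = G.neighborFinset i := by
          ext y
          simp only [SimpleGraph.mem_neighborFinset, hadj]
          have f4 : G.Adj i y → ¬ (i = y) := fun h e => (G.ne_of_adj h) e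
          tauto
        rw [hset]
        have : (G.neighborFinset i).card = D i := by rw [← hdeg i]; rfl
        rw [this]
        simp [lvl, hiα, hiβ]

lemma lvl_fst {n : ℕ} (D : Fin n → ℕ) (α β : Fin n) : lvl D α β α = D α - 1 := by
  simp [lvl]
lemma lvl_snd {n : ℕ} (D : Fin n → ℕ) {α β : Fin n} (hab : α ≠ β) : lvl D α β β = D β + 1 := by
  simp [lvl, hab.symm]
lemma lvl_other {n : ℕ} (D : Fin n → ℕ) {α β i : Fin n} (h1 : i ≠ α) (h2 : i ≠ β) :
    lvl D α β i = D i := by simp [lvl, h1, h2]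

lemma gap {n : ℕ} {A B C : Fin n → ℕ} (hC : IsLevelled A B C) {α β : Fin n}
    (h1 : A α < C α) (h2 : C β < B β) : C α ≤ C β + 1 := by
  by_contra hcon
  push_neg at hcon
  have hgap : C β + 2 ≤ C α := by omega
  have hab : α ≠ β := by rintro rfl; omega
  have hbet : Between A (lvl C α β) B := by
    intro i
    by_cases hiα : i = α
    · subst hiα; rw [lvl_fst]
      have := (hC.1 i); omega
    · by_cases hiβ : i = β
      · subst hiβ; rw [lvl_snd _ hab]
        have := (hC.1 i); omega
      · rw [lvl_other C hiα hiβ]; exact hC.1 i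
  have h3 := hC.2 α β hab (by omega) hbet
  have h4 := spread_lvl_lt C α β hgap
  omega

lemma sum_lvl {n : ℕ} (D : Fin n → ℕ) (α β : Fin n) (hab : α ≠ β) (h1 : 1 ≤ D α) :
    ∑ i, lvl D α β i = ∑ i, D i := by
  have key : ∀ (f g : Fin n → ℕ), (∀ i, i ≠ α → i ≠ β → f i = g i) →
      f α + f β = g α + g β → ∑ i, f i = ∑ i, g i := by
    intro f g hfg hsum
    rw [← Finset.add_sum_erase _ f (mem_univ α), ← Finset.add_sum_erase _ g (mem_univ α),
      ← Finset.add_sum_erase _ f (Finset.mem_erase.2 ⟨hab.symm, mem_univ β⟩),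
      ← Finset.add_sum_erase _ g (Finset.mem_erase.2 ⟨hab.symm, mem_univ β⟩)]
    have : ∑ i ∈ (univ.erase α).erase β, f i = ∑ i ∈ (univ.erase α).erase β, g i := by
      refine Finset.sum_congr rfl fun i hi => ?_
      simp only [Finset.mem_erase, mem_univ] at hi
      exact hfg i hi.2.1 hi.1
    omega
  refine key _ _ (fun i h1 h2 => by simp [lvl, h1, h2]) ?_
  simp [lvl, hab.symm]
  omega

lemma realize_down {n : ℕ} (A B C : Fin n → ℕ) (hC : IsLevelled A B C) :
    ∀ (k : ℕ) (D : Fin n → ℕ), (∑ i, (D i - C i)) ≤ k → IsGraphic D → Between A D B →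
      (∑ i, D i) ≤ (∑ i, C i) → ∃ D', IsGraphic D' ∧ Between A D' C := by
  intro k
  induction k with
  | zero =>
    intro D hk hg hb _
    refine ⟨D, hg, fun i => ⟨(hb i).1, ?_⟩⟩
    have h0 := (Finset.sum_eq_zero_iff.1 (Nat.le_zero.1 hk)) i (mem_univ i)
    omega
  | succ k ih =>
    intro D hk hg hb hs
    by_cases hall : ∀ i, D i ≤ C i
    · exact ⟨D, hg, fun i => ⟨(hb i).1, hall i⟩⟩
    · push_neg at hall
      obtain ⟨i, hi⟩ := hall
      have hi' : C i < D i := by omega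
      have hj : ∃ j, D j < C j := by
        by_contra hcon
        push_neg at hcon
        have : ∑ j, C j < ∑ j, D j :=
          Finset.sum_lt_sum (fun j _ => hcon j) ⟨i, mem_univ i, hi'⟩
        omega
      obtain ⟨j, hj⟩ := hj
      have hij : i ≠ j := by rintro rfl; omega
      have hgapij : C j ≤ C i + 1 := gap hC (by have := (hb j).1; omega) (by have := (hb i).2; omega)
      have hDji : D j < D i := by omega
      have hACi : A i ≤ C i := (hC.1 i).1
      have hCjB : C j ≤ B j := (hC.1 j).2
      refine ih (lvl D i j) ?_ (graphic_lvl hij hDji hg) ?_ ?_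
      · have hlt : ∑ i', (lvl D i j i' - C i') < ∑ i', (D i' - C i') := by
          refine Finset.sum_lt_sum (fun i' _ => ?_) ⟨i, mem_univ i, ?_⟩
          · by_cases h1 : i' = i
            · subst h1; rw [lvl_fst]; omega
            · by_cases h2 : i' = j
              · subst h2; rw [lvl_snd _ hij]; omega
              · rw [lvl_other _ h1 h2]
          · rw [lvl_fst]; omega
        omega
      · intro i'
        by_cases h1 : i' = i
        · subst h1; rw [lvl_fst]
          have := (hb i').2; omega
        · by_cases h2 : i' = j
          · subst h2; rw [lvl_snd _ hij]
            have := (hb i').1; omega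
          · rw [lvl_other _ h1 h2]; exact hb i'
      · rw [sum_lvl D i j hij (by omega)]; exact hs

lemma realize_up {n : ℕ} (A B C : Fin n → ℕ) (hC : IsLevelled A B C) :
    ∀ (k : ℕ) (D : Fin n → ℕ), (∑ i, (C i - D i)) ≤ k → IsGraphic D → Between A D B →
      (∑ i, C i) ≤ (∑ i, D i) → ∃ D', IsGraphic D' ∧ Between C D' B := by
  intro k
  induction k with
  | zero =>
    intro D hk hg hb _
    refine ⟨D, hg, fun i => ⟨?_, (hb i).2⟩⟩
    have h0 := (Finset.sum_eq_zero_iff.1 (Nat.le_zero.1 hk)) i (mem_univ i)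
    omega
  | succ k ih =>
    intro D hk hg hb hs
    by_cases hall : ∀ i, C i ≤ D i
    · exact ⟨D, hg, fun i => ⟨hall i, (hb i).2⟩⟩
    · push_neg at hall
      obtain ⟨i, hi⟩ := hall
      have hj : ∃ j, C j < D j := by
        by_contra hcon
        push_neg at hcon
        have : ∑ j, D j < ∑ j, C j :=
          Finset.sum_lt_sum (fun j _ => hcon j) ⟨i, mem_univ i, hi⟩
        omega
      obtain ⟨j, hj⟩ := hj
      have hij : i ≠ j := by rintro rfl; omega
      have hgapij : C i ≤ C j + 1 := gap hC (by have := (hb i).1; omega) (by have := (hb j).2; omega)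
      have hDij : D i < D j := by omega
      have hACj : A j ≤ C j := (hC.1 j).1
      have hCiB : C i ≤ B i := (hC.1 i).2
      refine ih (lvl D j i) ?_ (graphic_lvl hij.symm hDij hg) ?_ ?_
      · have hlt : ∑ i', (C i' - lvl D j i i') < ∑ i', (C i' - D i') := by
          refine Finset.sum_lt_sum (fun i' _ => ?_) ⟨i, mem_univ i, ?_⟩
          · by_cases h1 : i' = j
            · subst h1; rw [lvl_fst]; omega
            · by_cases h2 : i' = i
              · subst h2; rw [lvl_snd _ (Ne.symm hij)]; omega
              · rw [lvl_other _ h1 h2]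
          · rw [lvl_snd _ (Ne.symm hij)]; omega
        omega
      · intro i'
        by_cases h1 : i' = j
        · subst h1; rw [lvl_fst]
          have := (hb i').2; omega
        · by_cases h2 : i' = i
          · subst h2; rw [lvl_snd _ (Ne.symm hij)]
            have := (hb i').1; omega
          · rw [lvl_other _ h1 h2]; exact hb i'
      · rw [sum_lvl D j i hij.symm (by omega)]; exact hs


theorem stmt_10 {n : ℕ} (A B C D : Fin n → ℕ)
    (hS : ∀ i, A i ≤ B i ∧ B i ≤ n - 1)
    (hC : IsLevelled A B C) (hD : IsLevelled A B D) (hDg : IsGraphic D) :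
    (vol A D ≤ vol A C → Realizable A C) ∧
    (vol A C ≤ vol A D → Realizable C B) := by
  have hvol : ∀ X : Fin n → ℕ, Between A X B → vol A X + ∑ i, A i = ∑ i, X i := by
    intro X hX
    rw [vol, ← Finset.sum_add_distrib]
    exact Finset.sum_congr rfl fun i _ => by have := (hX i).1; omega
  have hvC := hvol C hC.1
  have hvD := hvol D hD.1
  constructor
  · intro hle
    exact realize_down A B C hC _ D le_rfl hDg hD.1 (by omega)
  · intro hle
    exact realize_up A B C hC _ D le_rfl hDg hD.1 (by omega)
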